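/- Let μ be a Borel probability measure on a compact interval [−L/2, L/2] ⊂ ℝ, let f̄(a) = Σᵢ λᵢ/((xᵢ−a)² + c) / Σᵢ λᵢ with finitely many terms, λᵢ > 0, c > 0, and suppose f̄(a) ≤ m for all a ∈ [−L/2, L/2] with f̄(a) = m for all a in the support of μ. If f̄ is not identically m on [−L/2, L/2], then the support of μ is a finite set. -/

import Mathlib

open MeasureTheory Set Finset Topology Filter

/-- The topological support of a measure: the set of points all of whose open
neighbourhoods have positive measure. -/
def msupport (μ : Measure ℝ) : Set ℝ :=
  {t | ∀ U : Set ℝ, IsOpen U → t ∈ U → 0 < μ U}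

/-- If a Borel probability measure `μ` on the compact interval `[−L/2, L/2]` is such
that the analytic function `f̄(a) = (Σᵢ λᵢ/((xᵢ−a)² + c)) / Σᵢ λᵢ` satisfies
`f̄ ≤ m` on the interval with equality on the support of `μ`, and `f̄` is not
identically `m` on the interval, then the support of `μ` is a finite set. -/
theorem support_finite_1D (L c m : ℝ) (hL : 0 < L) (hc : 0 < c)
    (n : ℕ) (x lam : Fin n → ℝ) (hlam : ∀ i, 0 < lam i)
    (fbar : ℝ → ℝ)
    (hfbar : ∀ a : ℝ, fbar a = (∑ i, lam i / ((x i - a)^2 + c)) / (∑ i, lam i))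
    (μ : Measure ℝ) [IsProbabilityMeasure μ]
    (hμsupp : μ (Icc (-(L/2)) (L/2))ᶜ = 0)
    (hsuppsub : msupport μ ⊆ Icc (-(L/2)) (L/2))
    (hle : ∀ a ∈ Icc (-(L/2)) (L/2), fbar a ≤ m)
    (heq : ∀ a ∈ msupport μ, fbar a = m)
    (hnc : ¬ ∀ a ∈ Icc (-(L/2)) (L/2), fbar a = m) :
    (msupport μ).Finite := by
  -- the function F = fbar - m is analytic on all of ℝ
  set F : ℝ → ℝ := fun a => fbar a - m with hF
  have hFan : AnalyticOnNhd ℝ F Set.univ := by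
    intro a _
    have hFeq : F = fun a : ℝ => (∑ i, lam i / ((x i - a)^2 + c)) / (∑ i, lam i) - m := by
      funext b; simp [hF, hfbar b]
    rw [hFeq]
    apply AnalyticAt.sub _ analyticAt_const
    rcases Nat.eq_zero_or_pos n with hn | hn
    · subst hn
      simpa using (analyticAt_const : AnalyticAt ℝ (fun _ : ℝ => (0:ℝ)) a)
    · refine AnalyticAt.div ?_ analyticAt_const ?_
      · apply Finset.analyticAt_fun_sum
        intro i _
        refine AnalyticAt.div analyticAt_const
          (((analyticAt_const.sub analyticAt_id).pow 2).add analyticAt_const) ?_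
        positivity
      · have : 0 < ∑ i, lam i :=
          Finset.sum_pos (fun i _ => hlam i) (Finset.univ_nonempty_iff.2 ⟨⟨0, hn⟩⟩)
        positivity
  by_contra hinf
  have hinf' : (msupport μ).Infinite := hinf
  obtain ⟨z₀, hz₀K, hz₀acc⟩ := hinf'.exists_accPt_of_subset_isCompact isCompact_Icc hsuppsub
  have hfreq : ∃ᶠ z in 𝓝[≠] z₀, F z = 0 := by
    have h1 := accPt_iff_frequently.1 hz₀acc
    rw [show ((𝓝[≠] z₀ : Filter ℝ)) = 𝓝[({z₀}ᶜ : Set ℝ)] z₀ from rfl,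
      frequently_nhdsWithin_iff]
    refine h1.mono fun z hz => ?_
    exact ⟨by simp [hF, sub_eq_zero, heq z hz.2], by simpa using hz.1⟩
  have hzero := hFan.eqOn_zero_of_preconnected_of_frequently_eq_zero isPreconnected_univ
    (Set.mem_univ z₀) hfreq
  apply hnc
  intro a _
  have := hzero (Set.mem_univ a)
  simpa [hF, sub_eq_zero] using this
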